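/- Let Γ and Γ' be distinct flows of 𝓕_i(a_1,…,a_q; b_1,…,b_q), with edges (s_1,t_1),…,(s_r,t_r) and (s'_1,t'_1),…,(s'_{r'},t'_{r'}) respectively, ordered so that t_1 > … > t_r and t'_1 > … > t'_{r'}. Then neither of these two edge sequences is a proper initial segment of the other, and at the least index l with (s_l,t_l) ≠ (s'_l,t'_l) one has t_l = t'_l and s_l ≠ s'_l. Consequently, declaring Γ < Γ' if and only if s_l > s'_l defines a strict linear order on 𝓕_i(a_1,…,a_q; b_1,…,b_q). -/

import Mathlib

open Finset

/-- A "flow graph" is a finite set of directed edges with integer vertices. -/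
abbrev FlowGraph : Type := Finset (ℤ × ℤ)

/-- The edges of `E` beginning at `r`. -/
def beginsAt (E : FlowGraph) (r : ℤ) : Finset (ℤ × ℤ) := E.filter (fun e => e.1 = r)

/-- The edges of `E` ending at `r`. -/
def endsAt (E : FlowGraph) (r : ℤ) : Finset (ℤ × ℤ) := E.filter (fun e => e.2 = r)

/-- `E` is a flow with set of sources `A` and set of sinks `B`:
every edge `(s,t)` has `s < t`; the sources and sinks are pairwise distinct;
exactly one edge begins at each source (and none ends there); exactly one edge
ends at each sink (and none begins there); and every other vertex either meets
no edge, or exactly one edge ends at it and exactly one edge begins at it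
(such a vertex is a transit point). -/
structure IsFlow (E : FlowGraph) (A B : Finset ℤ) : Prop where
  edge_lt : ∀ e ∈ E, e.1 < e.2
  disjAB : Disjoint A B
  source_out : ∀ a ∈ A, (beginsAt E a).card = 1
  source_in : ∀ a ∈ A, endsAt E a = ∅
  sink_in : ∀ b ∈ B, (endsAt E b).card = 1
  sink_out : ∀ b ∈ B, beginsAt E b = ∅
  transit : ∀ r : ℤ, r ∉ A → r ∉ B →
      (beginsAt E r = ∅ ∧ endsAt E r = ∅) ∨
      ((beginsAt E r).card = 1 ∧ (endsAt E r).card = 1)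

/-- The set of transit points of the flow `E` with sources `A` and sinks `B`:
the vertices meeting some edge which are neither sources nor sinks. -/
def transitSet (E : FlowGraph) (A B : Finset ℤ) : Finset ℤ :=
  ((E.image Prod.fst) ∪ (E.image Prod.snd)) \ (A ∪ B)

def IsTransitPoint (E : FlowGraph) (A B : Finset ℤ) (r : ℤ) : Prop :=
  r ∈ transitSet E A B

/-- Two vertices are linked if they lie in the same connected component of `E`. -/
def Linked (E : FlowGraph) (x y : ℤ) : Prop :=
  Relation.ReflTransGen (fun u v => (u, v) ∈ E ∨ (v, u) ∈ E) x y

/-- The finset of values of a family of integers. -/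
def srcSet {q : ℕ} (a : Fin q → ℤ) : Finset ℤ := Finset.image a Finset.univ

/-- Membership in `𝓕_i(a_1,…,a_q; b_1,…,b_q)` : a flow with sources the `a j`,
sinks the `b j`, and no transit point greater than `i`. -/
def InF {q : ℕ} (i : ℤ) (a b : Fin q → ℤ) (E : FlowGraph) : Prop :=
  IsFlow E (srcSet a) (srcSet b) ∧
  ∀ r : ℤ, IsTransitPoint E (srcSet a) (srcSet b) r → r ≤ i

/-- A list of edges ordered so that the ends are strictly decreasing. -/
def DescList (l : List (ℤ × ℤ)) : Prop := l.Pairwise (fun e f => f.2 < e.2)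

/-- The order on flows: `Γ < Γ'` iff, enumerating the edges of `Γ` and `Γ'` with
strictly decreasing ends, at the first index where the enumerations differ the
edge of `Γ` has a strictly larger beginning than the edge of `Γ'`. -/
def FlowLt (E E' : FlowGraph) : Prop :=
  ∃ (u v v' : List (ℤ × ℤ)) (e e' : ℤ × ℤ),
    DescList (u ++ e :: v) ∧ DescList (u ++ e' :: v') ∧
    (u ++ e :: v).toFinset = E ∧ (u ++ e' :: v').toFinset = E' ∧
    e'.1 < e.1

/-- Section 3.6: for distinct flows `Γ, Γ' ∈ 𝓕_i(a_1,…,a_q; b_1,…,b_q)` with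
edges enumerated with strictly decreasing ends, neither enumeration is a proper
initial segment of the other; at the first index where they differ the edges
have equal ends and distinct beginnings. Consequently `FlowLt` is a strict
linear order on `𝓕_i(a_1,…,a_q; b_1,…,b_q)`. -/
-- ===== auxiliary lemmas =====

lemma descList_nodup {l : List (ℤ × ℤ)} (h : DescList l) : l.Nodup :=
  h.imp (fun {e f} hlt hef => by subst hef; exact lt_irrefl _ hlt)

lemma descList_unique {l l' : List (ℤ × ℤ)} (h : DescList l) (h' : DescList l')
    (ht : l.toFinset = l'.toFinset) : l = l' := by
  have : IsAntisymm (ℤ × ℤ) (fun e f => f.2 < e.2) :=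
    ⟨fun p r h1 h2 => absurd (h1.trans h2) (lt_irrefl _)⟩
  exact List.Perm.eq_of_pairwise' h h'
    (List.perm_of_nodup_nodup_toFinset_eq (descList_nodup h) (descList_nodup h') ht)

lemma lt_of_mem_u {u v : List (ℤ × ℤ)} {e f : ℤ × ℤ} (h : DescList (u ++ e :: v))
    (hf : f ∈ u) : e.2 < f.2 :=
  (List.pairwise_append.mp h).2.2 f hf e List.mem_cons_self

lemma mem_u_of_lt {u v : List (ℤ × ℤ)} {e f : ℤ × ℤ} (h : DescList (u ++ e :: v))
    (hf : f ∈ u ++ e :: v) (hlt : e.2 < f.2) : f ∈ u := by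
  rcases List.mem_append.mp hf with h1 | h1
  · exact h1
  · exfalso
    rcases List.mem_cons.mp h1 with rfl | h1
    · exact lt_irrefl _ hlt
    · have h2 := (List.pairwise_append.mp h).2.1
      have h3 := (List.pairwise_cons.mp h2).1 f h1
      omega

lemma list_trichotomy {α : Type*} (l : List α) : ∀ l' : List α, l <+: l' ∨ l' <+: l ∨
    ∃ u e v e' v', l = u ++ e :: v ∧ l' = u ++ e' :: v' ∧ e ≠ e' := by
  induction l with
  | nil => intro l'; exact Or.inl List.nil_prefix
  | cons x xs ih =>
    intro l'
    cases l' with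
    | nil => exact Or.inr (Or.inl List.nil_prefix)
    | cons y ys =>
      by_cases hxy : x = y
      · subst hxy
        rcases ih ys with h | h | ⟨u, e, v, e', v', h1, h2, h3⟩
        · obtain ⟨t, ht⟩ := h
          exact Or.inl ⟨t, by rw [List.cons_append, ht]⟩
        · obtain ⟨t, ht⟩ := h
          exact Or.inr (Or.inl ⟨t, by rw [List.cons_append, ht]⟩)
        · exact Or.inr (Or.inr ⟨x :: u, e, v, e', v', by simp [h1], by simp [h2], h3⟩)
      · exact Or.inr (Or.inr ⟨[], x, xs, y, ys, rfl, rfl, hxy⟩)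

/-- Key lemma: for flows `E, E'` in `𝓕_i`, if a descending enumeration of `E`
splits as `u ++ e :: v` with `u` consisting of edges of `E'`, and every edge of `E'`
ending at `e.2` lies in `u`, we get a contradiction. -/
lemma K2 {q : ℕ} {i : ℤ} {a b : Fin q → ℤ} {E E' : FlowGraph}
    (hE : InF i a b E) (hE' : InF i a b E')
    {u v : List (ℤ × ℤ)} {e : ℤ × ℤ}
    (hdesc : DescList (u ++ e :: v)) (hl : (u ++ e :: v).toFinset = E)
    (hu : ∀ f ∈ u, f ∈ E')
    (hcap : ∀ f ∈ E', f.2 = e.2 → f ∈ u) : False := by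
  have heE : e ∈ E := by rw [← hl]; simp
  have htA : e.2 ∉ srcSet a := by
    intro h
    have h0 := hE.1.source_in e.2 h
    have h1 : e ∈ endsAt E e.2 := by simp [endsAt, heE]
    rw [h0] at h1; simp at h1
  have hex : ∃ f ∈ E', f.2 = e.2 := by
    by_cases htB : e.2 ∈ srcSet b
    · have h1 := hE'.1.sink_in e.2 htB
      have h2 : (endsAt E' e.2).Nonempty := by rw [← Finset.card_pos, h1]; norm_num
      obtain ⟨f, hf⟩ := h2
      exact ⟨f, (Finset.mem_filter.mp hf).1, (Finset.mem_filter.mp hf).2⟩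
    · have hend : e ∈ endsAt E e.2 := by simp [endsAt, heE]
      have hbeg : ∃ g ∈ E, g.1 = e.2 := by
        rcases hE.1.transit e.2 htA htB with ⟨h1, h2⟩ | ⟨h1, h2⟩
        · rw [h2] at hend; simp at hend
        · have h3 : (beginsAt E e.2).Nonempty := by rw [← Finset.card_pos, h1]; norm_num
          obtain ⟨g, hg⟩ := h3
          exact ⟨g, (Finset.mem_filter.mp hg).1, (Finset.mem_filter.mp hg).2⟩
      obtain ⟨g, hgE, hg1⟩ := hbeg
      have hg2 : e.2 < g.2 := by have := hE.1.edge_lt g hgE; omega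
      have hgmem : g ∈ u ++ e :: v := by rw [← List.mem_toFinset, hl]; exact hgE
      have hgE' : g ∈ E' := hu g (mem_u_of_lt hdesc hgmem hg2)
      rcases hE'.1.transit e.2 htA htB with ⟨h1, h2⟩ | ⟨h1, h2⟩
      · exfalso
        have h3 : g ∈ beginsAt E' e.2 := by simp [beginsAt, hgE', hg1]
        rw [h1] at h3; simp at h3
      · have h3 : (endsAt E' e.2).Nonempty := by rw [← Finset.card_pos, h2]; norm_num
        obtain ⟨f, hf⟩ := h3
        exact ⟨f, (Finset.mem_filter.mp hf).1, (Finset.mem_filter.mp hf).2⟩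
  obtain ⟨f, hfE', hf2⟩ := hex
  have := lt_of_mem_u hdesc (hcap f hfE' hf2)
  omega

lemma ends_inj {E : FlowGraph} {A B : Finset ℤ} (hE : IsFlow E A B)
    {e f : ℤ × ℤ} (he : e ∈ E) (hf : f ∈ E) (h2 : e.2 = f.2) : e = f := by
  have hcard : (endsAt E e.2).card ≤ 1 := by
    by_cases hA : e.2 ∈ A
    · simp [hE.source_in _ hA]
    by_cases hB : e.2 ∈ B
    · exact le_of_eq (hE.sink_in _ hB)
    rcases hE.transit e.2 hA hB with ⟨g1, g2⟩ | ⟨g1, g2⟩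
    · simp [g2]
    · exact le_of_eq g2
  have he' : e ∈ endsAt E e.2 := by simp [endsAt, he]
  have hf' : f ∈ endsAt E e.2 := by simp [endsAt, hf, h2.symm]
  exact Finset.card_le_one.mp hcard e he' f hf'

lemma exists_descList {E : FlowGraph} {A B : Finset ℤ} (hE : IsFlow E A B) :
    ∃ l : List (ℤ × ℤ), DescList l ∧ l.toFinset = E := by
  classical
  let r : ℤ × ℤ → ℤ × ℤ → Prop := fun e f => f.2 ≤ e.2
  have hdec : DecidableRel r := fun e f => inferInstanceAs (Decidable (f.2 ≤ e.2))
  have htot : IsTotal _ r := ⟨fun e f => le_total f.2 e.2⟩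
  have htrans : IsTrans _ r := ⟨fun p s t h1 h2 => le_trans h2 h1⟩
  refine ⟨List.insertionSort r E.toList, ?_, ?_⟩
  · have hsort : List.Pairwise r (List.insertionSort r E.toList) :=
      List.pairwise_insertionSort r E.toList
    have hperm := List.perm_insertionSort r E.toList
    have hnd : (List.insertionSort r E.toList).Nodup :=
      hperm.nodup_iff.mpr (Finset.nodup_toList E)
    have hmem : ∀ x ∈ List.insertionSort r E.toList, x ∈ E := fun x hx =>
      Finset.mem_toList.mp (hperm.mem_iff.mp hx)
    refine List.Pairwise.imp_of_mem ?_ (hsort.and hnd)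
    rintro e f he hf ⟨hle, hne⟩
    rcases lt_or_eq_of_le hle with h | h
    · exact h
    · exact absurd (ends_inj hE (hmem e he) (hmem f hf) h.symm) hne
  · ext x
    rw [List.mem_toFinset, (List.perm_insertionSort r E.toList).mem_iff, Finset.mem_toList]

lemma part1 {q : ℕ} {i : ℤ} {a b : Fin q → ℤ}
    {E E' : FlowGraph} (hE : InF i a b E) (hE' : InF i a b E') (hne : E ≠ E')
    {l l' : List (ℤ × ℤ)} (hd : DescList l) (hd' : DescList l')
    (hl : l.toFinset = E) (hl' : l'.toFinset = E') :
    (¬ l <+: l') ∧ (¬ l' <+: l) ∧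
    ∃ (u v v' : List (ℤ × ℤ)) (e e' : ℤ × ℤ),
      l = u ++ e :: v ∧ l' = u ++ e' :: v' ∧
      e ≠ e' ∧ e.2 = e'.2 ∧ e.1 ≠ e'.1 := by
  have noPre : ∀ (F F' : FlowGraph) (m m' : List (ℤ × ℤ)), InF i a b F → InF i a b F' →
      F ≠ F' → DescList m' → m.toFinset = F → m'.toFinset = F' → ¬ m <+: m' := by
    rintro F F' m m' hF hF' hFne hdm' hm hm' ⟨t, rfl⟩
    cases t with
    | nil =>
      rw [List.append_nil] at hm'
      exact hFne (hm ▸ hm' ▸ rfl)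
    | cons g rest =>
      exact K2 hF' hF hdm' hm'
        (fun f hf => by
          rw [← hm]; exact List.mem_toFinset.mpr hf)
        (fun f hfF _ => by
          rw [← hm] at hfF; exact List.mem_toFinset.mp hfF)
  have hnp1 : ¬ l <+: l' := noPre E E' l l' hE hE' hne hd' hl hl'
  have hnp2 : ¬ l' <+: l := noPre E' E l' l hE' hE hne.symm hd hl' hl
  refine ⟨hnp1, hnp2, ?_⟩
  rcases list_trichotomy l l' with h | h | ⟨u, e, v, e', v', h1, h2, hee'⟩
  · exact absurd h hnp1
  · exact absurd h hnp2
  subst h1; subst h2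
  have h22 : e.2 = e'.2 := by
    by_contra hne2
    rcases lt_or_gt_of_ne hne2 with hlt | hgt
    · exact K2 hE' hE hd' hl'
        (fun f hf => by rw [← hl]; exact List.mem_toFinset.mpr (List.mem_append_left _ hf))
        (fun f hfE hf2 => mem_u_of_lt hd (by rw [← List.mem_toFinset, hl]; exact hfE)
          (by omega))
    · exact K2 hE hE' hd hl
        (fun f hf => by rw [← hl']; exact List.mem_toFinset.mpr (List.mem_append_left _ hf))
        (fun f hfE' hf2 => mem_u_of_lt hd' (by rw [← List.mem_toFinset, hl']; exact hfE')
          (by omega))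
  exact ⟨u, v, v', e, e', rfl, rfl, hee', h22,
    fun h11 => hee' (Prod.ext h11 h22)⟩

lemma flowLt_asymm {E E' : FlowGraph} (h : FlowLt E E') (h' : FlowLt E' E) : False := by
  obtain ⟨u, v, v2, e, e', hd1, hd2, hL1, hL2, hlt⟩ := h
  obtain ⟨w, x, y, f, f', hd2', hd1', hL2', hL1', hlt'⟩ := h'
  have hEqE : u ++ e :: v = w ++ f' :: y :=
    descList_unique hd1 hd1' (hL1.trans hL1'.symm)
  have hEqE' : u ++ e' :: v2 = w ++ f :: x :=
    descList_unique hd2 hd2' (hL2.trans hL2'.symm)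
  have hu : u <+: w ∨ w <+: u :=
    List.prefix_or_prefix_of_prefix (⟨e :: v, rfl⟩ : u <+: u ++ e :: v)
      (hEqE ▸ ⟨f' :: y, rfl⟩)
  rcases hu with ⟨m, rfl⟩ | ⟨m, rfl⟩
  · cases m with
    | nil =>
      rw [List.append_nil] at hEqE hEqE'
      have h1 : e = f' := (List.cons.injEq _ _ _ _ ▸ List.append_cancel_left hEqE).1
      have h2 : e' = f := (List.cons.injEq _ _ _ _ ▸ List.append_cancel_left hEqE').1
      rw [h2, h1] at hlt; omega
    | cons g m' =>
      rw [List.append_assoc] at hEqE hEqE'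
      have q1 := List.append_cancel_left hEqE
      have q2 := List.append_cancel_left hEqE'
      simp only [List.cons_append] at q1 q2
      have e1 : e = g := ((List.cons.injEq _ _ _ _ ▸ q1).1)
      have e2 : e' = g := ((List.cons.injEq _ _ _ _ ▸ q2).1)
      rw [e1, e2] at hlt; omega
  · cases m with
    | nil =>
      rw [List.append_nil] at hEqE hEqE'
      have h1 : e = f' := (List.cons.injEq _ _ _ _ ▸ List.append_cancel_left hEqE).1
      have h2 : e' = f := (List.cons.injEq _ _ _ _ ▸ List.append_cancel_left hEqE').1
      rw [h2, h1] at hlt; omega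
    | cons g m' =>
      rw [List.append_assoc] at hEqE hEqE'
      have q1 := List.append_cancel_left hEqE
      have q2 := List.append_cancel_left hEqE'
      simp only [List.cons_append] at q1 q2
      have e1 : g = f' := (List.cons.injEq _ _ _ _ ▸ q1).1
      have e2 : g = f := (List.cons.injEq _ _ _ _ ▸ q2).1
      rw [← e1, ← e2] at hlt'; omega

lemma flowLt_trans {E₁ E₂ E₃ : FlowGraph} (h12 : FlowLt E₁ E₂) (h23 : FlowLt E₂ E₃) :
    FlowLt E₁ E₃ := by
  obtain ⟨u, v, v2, e, e', hd1, hd2, hL1, hL2, hlt⟩ := h12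
  obtain ⟨w, x, y, f, f', hd2', hd3, hL2', hL3, hlt'⟩ := h23
  have hEq : u ++ e' :: v2 = w ++ f :: x :=
    descList_unique hd2 hd2' (hL2.trans hL2'.symm)
  have hu : u <+: w ∨ w <+: u :=
    List.prefix_or_prefix_of_prefix (⟨e' :: v2, hEq⟩ : u <+: w ++ f :: x)
      ⟨f :: x, rfl⟩
  rcases hu with ⟨m, rfl⟩ | ⟨m, rfl⟩
  · cases m with
    | nil =>
      rw [List.append_nil] at hEq hd3 hL3
      have h1 : e' = f := (List.cons.injEq _ _ _ _ ▸ List.append_cancel_left hEq).1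
      exact ⟨u, v, y, e, f', hd1, hd3, hL1, hL3, by rw [← h1] at hlt'; omega⟩
    | cons g m' =>
      rw [List.append_assoc] at hEq
      have q := List.append_cancel_left hEq
      simp only [List.cons_append] at q
      have e1 : e' = g := (List.cons.injEq _ _ _ _ ▸ q).1
      have hre : (u ++ g :: m') ++ f' :: y = u ++ g :: (m' ++ f' :: y) := by simp
      rw [hre] at hd3 hL3
      rw [← e1] at hd3 hL3
      exact ⟨u, v, m' ++ f' :: y, e, e', hd1, hd3, hL1, hL3, hlt⟩
  · cases m with
    | nil =>
      rw [List.append_nil] at hEq hd1 hL1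
      have h1 : e' = f := (List.cons.injEq _ _ _ _ ▸ List.append_cancel_left hEq).1
      exact ⟨w, v, y, e, f', hd1, hd3, hL1, hL3, by rw [← h1] at hlt'; omega⟩
    | cons g m' =>
      rw [List.append_assoc] at hEq
      have q := List.append_cancel_left hEq
      simp only [List.cons_append] at q
      have e1 : g = f := (List.cons.injEq _ _ _ _ ▸ q).1
      have hre : (w ++ g :: m') ++ e :: v = w ++ g :: (m' ++ e :: v) := by simp
      rw [hre] at hd1 hL1
      rw [e1] at hd1 hL1
      refine ⟨w, m' ++ e :: v, y, f, f', hd1, hd3, hL1, hL3, hlt'⟩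

theorem statement12 {q : ℕ} (i : ℤ) (a b : Fin q → ℤ)
    (ha : StrictMono a) (hb : StrictAnti b)
    (hai : ∀ j, a j ≤ i) (hbi : ∀ j, i < b j) :
    (∀ E E' : FlowGraph, InF i a b E → InF i a b E' → E ≠ E' →
      ∀ l l' : List (ℤ × ℤ), DescList l → DescList l' →
        l.toFinset = E → l'.toFinset = E' →
        (¬ l <+: l') ∧ (¬ l' <+: l) ∧
        ∃ (u v v' : List (ℤ × ℤ)) (e e' : ℤ × ℤ),
          l = u ++ e :: v ∧ l' = u ++ e' :: v' ∧
          e ≠ e' ∧ e.2 = e'.2 ∧ e.1 ≠ e'.1) ∧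
    (∀ E : FlowGraph, InF i a b E → ¬ FlowLt E E) ∧
    (∀ E₁ E₂ E₃ : FlowGraph, InF i a b E₁ → InF i a b E₂ → InF i a b E₃ →
      FlowLt E₁ E₂ → FlowLt E₂ E₃ → FlowLt E₁ E₃) ∧
    (∀ E E' : FlowGraph, InF i a b E → InF i a b E' → E ≠ E' →
      (FlowLt E E' ↔ ¬ FlowLt E' E)) := by
  refine ⟨fun E E' hE hE' hne l l' hd hd' hl hl' => part1 hE hE' hne hd hd' hl hl',
    fun E _ h => flowLt_asymm h h,
    fun E₁ E₂ E₃ _ _ _ h12 h23 => flowLt_trans h12 h23,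
    fun E E' hE hE' hne => ⟨fun h h' => flowLt_asymm h h', fun hn => ?_⟩⟩
  obtain ⟨L, hdL, hLE⟩ := exists_descList hE.1
  obtain ⟨L', hdL', hLE'⟩ := exists_descList hE'.1
  obtain ⟨-, -, u, v, v', e, e', h1, h2, -, -, h11⟩ :=
    part1 hE hE' hne hdL hdL' hLE hLE'
  subst h1; subst h2
  rcases lt_or_gt_of_ne h11 with hlt | hgt
  · exact absurd ⟨u, v', v, e', e, hdL', hdL, hLE', hLE, hlt⟩ hn
  · exact ⟨u, v, v', e, e', hdL, hdL', hLE, hLE', hgt⟩
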